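/- Let f be an expansive homeomorphism of a compact metric space with expansivity constant α, and 0 < ε < α. If x is a Lyapunov stable point, then for every ε' ≤ ε there exists σ > 0 such that for all n ≥ 0, the set f⁻ⁿ(S_{ε'}(x)) contains the open ball of radius σ around f⁻ⁿ(x), provided M is locally connected and connected. (Step 2 of Lewowicz's no-stable-points theorem.) -/

import Mathlib

open Metric

section Aux

variable {M : Type*} [MetricSpace M]

lemma aux_cont_pow (f : Equiv.Perm M) (hf : Continuous f) (n : ℕ) :
    Continuous ⇑(f ^ n) := by
  induction n with
  | zero => simp only [pow_zero, Equiv.Perm.coe_one]; exact continuous_id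
  | succ n ih =>
    rw [pow_succ, Equiv.Perm.coe_mul]
    exact ih.comp hf

lemma aux_cont_zpow (f : Equiv.Perm M) (hf : Continuous f) (hf' : Continuous f.symm) (j : ℤ) :
    Continuous ⇑(f ^ j) := by
  have hinv : ∀ n : ℕ, Continuous ⇑(f ^ n)⁻¹ := by
    intro n
    induction n with
    | zero => simp only [pow_zero, inv_one, Equiv.Perm.coe_one]; exact continuous_id
    | succ n ih =>
      rw [pow_succ, mul_inv_rev, Equiv.Perm.coe_mul]
      have h1 : ⇑(f⁻¹) = ⇑f.symm := rfl
      rw [h1]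
      exact hf'.comp ih
  cases j with
  | ofNat n => rw [Int.ofNat_eq_natCast, zpow_natCast]; exact aux_cont_pow f hf n
  | negSucc n => rw [zpow_negSucc]; exact hinv (n + 1)

lemma zpow_apply_add (f : Equiv.Perm M) (a b : ℤ) (z : M) :
    (f ^ a) ((f ^ b) z) = (f ^ (a + b)) z := by
  rw [← Equiv.Perm.mul_apply, ← zpow_add]

lemma natz_apply (f : Equiv.Perm M) (m : ℕ) (y : M) :
    (f ^ m) y = (f ^ (m : ℤ)) y := by rw [zpow_natCast]

lemma aux_unif [CompactSpace M] (f : Equiv.Perm M) (hf : Continuous f)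
    (hf' : Continuous f.symm) (N : ℕ) (c : ℝ) (hc : 0 < c) :
    ∃ η > (0 : ℝ), ∀ u v : M, dist u v < η →
      ∀ s : ℕ, s ≤ N → dist ((f ^ (s : ℤ)) u) ((f ^ (s : ℤ)) v) < c := by
  induction N with
  | zero =>
    refine ⟨c, hc, fun u v huv s hs => ?_⟩
    have : s = 0 := Nat.le_zero.mp hs
    subst this
    simpa using huv
  | succ N ih =>
    obtain ⟨η, hη0, hη⟩ := ih
    have hu : UniformContinuous ⇑(f ^ (((N + 1 : ℕ)) : ℤ)) :=
      CompactSpace.uniformContinuous_of_continuous (aux_cont_zpow f hf hf' _)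
    obtain ⟨η₂, hη₂0, hη₂⟩ := Metric.uniformContinuous_iff.mp hu c hc
    refine ⟨min η η₂, lt_min hη0 hη₂0, fun u v huv s hs => ?_⟩
    by_cases h : s ≤ N
    · exact hη u v (lt_of_lt_of_le huv (min_le_left _ _)) s h
    · have hsN : s = N + 1 := le_antisymm hs (not_le.mp h)
      subst hsN
      exact hη₂ (lt_of_lt_of_le huv (min_le_right _ _))

lemma aux_ulc [CompactSpace M] [LocallyConnectedSpace M] (η : ℝ) (hη : 0 < η) :
    ∃ ρ > (0 : ℝ), ∀ q : M, ∃ C : Set M,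
      IsOpen C ∧ IsPreconnected C ∧ ball q ρ ⊆ C ∧ C ⊆ ball q η := by
  have h : ∀ p : M, ∃ V : Set M, V ⊆ ball p (η / 2) ∧ IsOpen V ∧ p ∈ V ∧ IsConnected V :=
    fun p => locallyConnectedSpace_iff_subsets_isOpen_isConnected.mp ‹_› p _
      (ball_mem_nhds p (by linarith))
  choose V hV1 hV2 hV3 hV4 using h
  have hcov : (Set.univ : Set M) ⊆ ⋃ p, V p := fun q _ => Set.mem_iUnion.mpr ⟨q, hV3 q⟩
  obtain ⟨ρ, hρ0, hρ⟩ := lebesgue_number_lemma_of_metric isCompact_univ hV2 hcov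
  refine ⟨ρ, hρ0, fun q => ?_⟩
  obtain ⟨p, hp⟩ := hρ q (Set.mem_univ q)
  refine ⟨V p, hV2 p, (hV4 p).isPreconnected, hp, fun c hc => ?_⟩
  have hq : dist q p < η / 2 := mem_ball.mp (hV1 p (hp (mem_ball_self hρ0)))
  have hc' : dist c p < η / 2 := mem_ball.mp (hV1 p hc)
  have : dist c q ≤ dist c p + dist p q := dist_triangle _ _ _
  rw [dist_comm p q] at this
  exact mem_ball.mpr (by linarith)

lemma aux_sep {C F : Set M} (hC : IsPreconnected C) (hCo : IsOpen C) (hF : IsClosed F)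
    (h1 : (C ∩ F).Nonempty) (h2 : (C \ F).Nonempty) :
    ∃ w, w ∈ C ∩ F ∧ w ∈ closure (C \ F) := by
  by_contra hcon
  push_neg at hcon
  have h := hC (closure (C \ F))ᶜ (C ∩ Fᶜ) isClosed_closure.isOpen_compl
    (hCo.inter hF.isOpen_compl) ?_ ?_ ?_
  · obtain ⟨c, hc1, hc2, hc3⟩ := h
    exact hc2 (subset_closure ⟨hc3.1, hc3.2⟩)
  · intro c hc
    by_cases hcF : c ∈ F
    · exact Or.inl (hcon c ⟨hc, hcF⟩)
    · exact Or.inr ⟨hc, hcF⟩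
  · obtain ⟨w, hw⟩ := h1
    exact ⟨w, hw.1, hcon w hw⟩
  · obtain ⟨z, hz⟩ := h2
    exact ⟨z, hz.1, hz.1, hz.2⟩

end Aux

/-- A point is Lyapunov stable for (the iterates of) `f`. -/
def LyapunovStable {M : Type*} [MetricSpace M] (f : Equiv.Perm M) (x : M) : Prop :=
  ∀ ε > (0 : ℝ), ∃ δ > (0 : ℝ), ∀ y : M, dist x y < δ →
    ∀ n : ℕ, dist ((f ^ n) x) ((f ^ n) y) < ε

theorem backward_images_of_stable_set_contain_uniform_balls
    {M : Type*} [MetricSpace M] [CompactSpace M]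
    [ConnectedSpace M] [LocallyConnectedSpace M]
    (f : Equiv.Perm M) (hf : Continuous f) (hf' : Continuous f.symm)
    (α : ℝ) (hα : 0 < α)
    (hexp : ∀ x y : M, x ≠ y → ∃ n : ℤ, α ≤ dist ((f ^ n) x) ((f ^ n) y))
    (ε : ℝ) (hε : 0 < ε) (hεα : ε < α)
    (x : M) (hx : LyapunovStable f x) :
    ∀ ε' : ℝ, 0 < ε' → ε' ≤ ε → ∃ σ > (0 : ℝ), ∀ n : ℕ,
      Metric.ball ((f ^ (-(n : ℤ))) x) σ ⊆
        (f ^ (-(n : ℤ))) '' {y : M | ∀ m : ℕ, dist ((f ^ m) x) ((f ^ m) y) ≤ ε'} := by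
  intro ε' hε'0 hε'ε
  obtain ⟨δ, hδ0, hδ⟩ := hx ε' hε'0
  set S : Set M := {y : M | ∀ m : ℕ, dist ((f ^ m) x) ((f ^ m) y) ≤ ε'} with hS
  -- per-n radius
  have hL4 : ∀ n : ℕ, ∃ σ > (0 : ℝ), ∀ z : M,
      dist ((f ^ (-(n : ℤ))) x) z < σ → (f ^ (n : ℤ)) z ∈ S := by
    intro n
    have hc : Continuous ⇑(f ^ (n : ℤ)) := aux_cont_zpow f hf hf' _
    have h0 : (f ^ (n : ℤ)) ((f ^ (-(n : ℤ))) x) = x := by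
      rw [zpow_apply_add]; simp
    obtain ⟨σ, hσ0, hσ⟩ := Metric.continuous_iff.mp hc ((f ^ (-(n : ℤ))) x) δ hδ0
    refine ⟨σ, hσ0, fun z hz => ?_⟩
    have h1 := hσ z (by rw [dist_comm]; exact hz)
    rw [h0] at h1
    intro m
    exact (hδ _ (by rw [dist_comm]; exact h1) m).le
  choose σfun hσfun0 hσfun using hL4
  by_contra hcon
  push_neg at hcon
  have hmins : ∀ k : ℕ, ∃ c > (0 : ℝ), ∀ n, n < k → c ≤ σfun n := by
    intro k
    induction k with
    | zero => exact ⟨1, one_pos, fun n hn => absurd hn (Nat.not_lt_zero n)⟩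
    | succ k ih =>
      obtain ⟨c, hc0, hc⟩ := ih
      refine ⟨min c (σfun k), lt_min hc0 (hσfun0 k), fun n hn => ?_⟩
      rcases Nat.lt_succ_iff_lt_or_eq.mp hn with h | h
      · exact le_trans (min_le_left _ _) (hc n h)
      · subst h; exact min_le_right _ _
  -- key construction
  have key : ∀ k : ℕ, ∃ p q : M, min δ ε' ≤ dist p q ∧
      ∀ j : ℤ, -(k : ℤ) ≤ j → dist ((f ^ j) p) ((f ^ j) q) ≤ ε' := by
    intro k
    obtain ⟨η, hη0, hη⟩ := aux_unif f hf hf' k ε' hε'0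
    obtain ⟨ρ, hρ0, hρ⟩ := aux_ulc (M := M) η hη0
    obtain ⟨c, hc0, hc⟩ := hmins k
    obtain ⟨n, hn⟩ := hcon (min ρ c) (lt_min hρ0 hc0)
    rw [Set.not_subset] at hn
    obtain ⟨z, hz1, hz2⟩ := hn
    have hz2' : (f ^ (n : ℤ)) z ∉ S := by
      intro hmem
      exact hz2 ⟨(f ^ (n : ℤ)) z, hmem, by rw [zpow_apply_add]; simp⟩
    have hzd : dist ((f ^ (-(n : ℤ))) x) z < min ρ c := mem_ball'.mp hz1
    have hnk : k ≤ n := by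
      by_contra h
      exact hz2' (hσfun n z (lt_of_lt_of_le hzd (le_trans (min_le_right _ _)
        (hc n (not_le.mp h)))))
    obtain ⟨C, hCo, hCp, hCb, hCs⟩ := hρ ((f ^ (-(n : ℤ))) x)
    have hxC : (f ^ (-(n : ℤ))) x ∈ C := hCb (mem_ball_self hρ0)
    have hzC : z ∈ C := hCb (mem_ball'.mpr (lt_of_lt_of_le hzd (min_le_left _ _)))
    set F : Set M := {w : M | ∀ s : ℕ, dist ((f ^ ((s : ℤ) - n)) x) ((f ^ (s : ℤ)) w) ≤ ε'}
      with hF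
    have hFc : IsClosed F := by
      have : F = ⋂ s : ℕ, {w : M | dist ((f ^ ((s : ℤ) - n)) x) ((f ^ (s : ℤ)) w) ≤ ε'} := by
        ext w; simp [hF, Set.mem_iInter]
      rw [this]
      exact isClosed_iInter fun s =>
        isClosed_le (continuous_const.dist (aux_cont_zpow f hf hf' _)) continuous_const
    have hxF : (f ^ (-(n : ℤ))) x ∈ F := by
      intro s
      rw [zpow_apply_add, show (s : ℤ) + -(n : ℤ) = (s : ℤ) - n from (sub_eq_add_neg _ _).symm,
        dist_self]
      exact hε'0.le
    have hzF : z ∉ F := by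
      intro hzf
      apply hz2'
      intro m
      have h1 := hzf (m + n)
      rw [show (((m + n : ℕ)) : ℤ) - (n : ℤ) = (m : ℤ) by push_cast; ring] at h1
      rw [natz_apply f m x, natz_apply f m ((f ^ (n : ℤ)) z), zpow_apply_add]
      rwa [show (((m + n : ℕ)) : ℤ) = (m : ℤ) + n by push_cast; ring] at h1
    obtain ⟨w, ⟨hwC, hwF⟩, hwcl⟩ := aux_sep hCp hCo hFc ⟨_, hxC, hxF⟩ ⟨z, hzC, hzF⟩
    have hsmall : ∀ s : ℕ, s ≤ k → ∀ w' ∈ C,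
        dist ((f ^ ((s : ℤ) - n)) x) ((f ^ (s : ℤ)) w') < ε' := by
      intro s hs w' hw'
      have hd : dist ((f ^ (-(n : ℤ))) x) w' < η := mem_ball'.mp (hCs hw')
      have h2 := hη _ _ hd s hs
      rwa [zpow_apply_add, show (s : ℤ) + -(n : ℤ) = (s : ℤ) - n from
        (sub_eq_add_neg _ _).symm] at h2
    by_cases hcase : ∀ s : ℕ, s < n → dist ((f ^ ((s : ℤ) - n)) x) ((f ^ (s : ℤ)) w) < ε'
    · refine ⟨x, (f ^ (n : ℤ)) w, le_trans (min_le_left _ _) ?_, ?_⟩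
      · by_contra hlt
        push_neg at hlt
        have hVo1 : IsOpen {w' : M | dist x ((f ^ (n : ℤ)) w') < δ} :=
          isOpen_lt (continuous_const.dist (aux_cont_zpow f hf hf' _)) continuous_const
        have hVo2 : IsOpen (⋂ s ∈ Finset.range n,
            {w' : M | dist ((f ^ ((s : ℤ) - n)) x) ((f ^ (s : ℤ)) w') < ε'}) :=
          isOpen_biInter_finset fun s _ =>
            isOpen_lt (continuous_const.dist (aux_cont_zpow f hf hf' _)) continuous_const
        have hwV : w ∈ {w' : M | dist x ((f ^ (n : ℤ)) w') < δ} ∩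
            ⋂ s ∈ Finset.range n,
              {w' : M | dist ((f ^ ((s : ℤ) - n)) x) ((f ^ (s : ℤ)) w') < ε'} :=
          ⟨hlt, Set.mem_iInter₂.mpr fun s hs => hcase s (Finset.mem_range.mp hs)⟩
        obtain ⟨w', hw'V, hw'C, hw'F⟩ :=
          mem_closure_iff.mp hwcl _ (hVo1.inter hVo2) hwV
        simp only [hF, Set.mem_setOf_eq, not_forall, not_le] at hw'F
        obtain ⟨s, hsgt⟩ := hw'F
        by_cases hsn : s < n
        · have hlt2 := Set.mem_iInter₂.mp hw'V.2 s (Finset.mem_range.mpr hsn)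
          simp only [Set.mem_setOf_eq] at hlt2
          linarith
        · have hsn' : n ≤ s := not_lt.mp hsn
          have hst := hδ _ (hw'V.1 : dist x ((f ^ (n : ℤ)) w') < δ) (s - n)
          rw [natz_apply, natz_apply, zpow_apply_add,
            show (((s - n : ℕ)) : ℤ) = (s : ℤ) - n by omega,
            show (s : ℤ) - n + n = (s : ℤ) by ring] at hst
          linarith
      · intro j hj
        rw [zpow_apply_add]
        have hjn : (0 : ℤ) ≤ j + n := by
          have : (k : ℤ) ≤ n := by exact_mod_cast hnk
          omega
        have hs' : (((j + n).toNat : ℕ) : ℤ) = j + n := Int.toNat_of_nonneg hjn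
        have h2 := hwF (j + n).toNat
        rw [hs', add_sub_cancel_right] at h2
        exact h2
    · push_neg at hcase
      obtain ⟨s, hsn, hsge⟩ := hcase
      have hsk : k < s := by
        by_contra h
        exact absurd (hsmall s (not_lt.mp h) w hwC) (not_lt.mpr hsge)
      refine ⟨(f ^ ((s : ℤ) - n)) x, (f ^ (s : ℤ)) w, le_trans (min_le_right _ _) hsge, ?_⟩
      intro j hj
      rw [zpow_apply_add, zpow_apply_add]
      have hjs : (0 : ℤ) ≤ j + s := by
        have : (k : ℤ) < s := by exact_mod_cast hsk
        omega
      have ht : (((j + s).toNat : ℕ) : ℤ) = j + s := Int.toNat_of_nonneg hjs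
      have h2 := hwF (j + s).toNat
      rw [ht] at h2
      rw [show (j : ℤ) + ((s : ℤ) - n) = (j + s) - n by ring]
      exact h2
  -- pass to the limit
  choose p q hpq hwin using key
  obtain ⟨⟨a, b⟩, -, φ, hφ, hlim⟩ :=
    IsCompact.tendsto_subseq (x := fun k => (p k, q k)) isCompact_univ
      (fun k => Set.mem_univ _)
  have hab : a ≠ b := by
    have hcont : Continuous fun y : M × M => dist y.1 y.2 :=
      continuous_fst.dist continuous_snd
    have hd := (hcont.tendsto (a, b)).comp hlim
    have hle : min δ ε' ≤ dist a b :=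
      ge_of_tendsto hd (Filter.Eventually.of_forall fun k => hpq (φ k))
    intro h
    rw [h, dist_self] at hle
    have := lt_min hδ0 hε'0
    linarith
  obtain ⟨j, hj⟩ := hexp a b hab
  have hub : dist ((f ^ j) a) ((f ^ j) b) ≤ ε' := by
    have hcont : Continuous fun y : M × M => dist ((f ^ j) y.1) ((f ^ j) y.2) :=
      ((aux_cont_zpow f hf hf' j).comp continuous_fst).dist
        ((aux_cont_zpow f hf hf' j).comp continuous_snd)
    have hd := (hcont.tendsto (a, b)).comp hlim
    refine le_of_tendsto hd ?_
    filter_upwards [Filter.eventually_ge_atTop j.natAbs] with k hk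
    apply hwin (φ k)
    have h1 : k ≤ φ k := hφ.le_apply
    have h2 : (j.natAbs : ℤ) ≤ (φ k : ℤ) := by exact_mod_cast le_trans hk h1
    omega
  linarith
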